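/- The size-difference heuristic is a valid lower bound: if a partial matching M' between BDTs b_f and b_g leaves sets U and V of unmatched nodes with n = |U| - |V| > 0, then any full matching extending M' must delete at least n nodes of U, and hence its cost is at least the n-th smallest half-persistence among nodes of U. -/

import Mathlib

open scoped Classical

/-- A branch of a merge tree, encoded by its (saddle value, extremum value). -/
abbrev Branch := ℝ × ℝ

/-- Persistence of a branch. -/
noncomputable def pers (x : Branch) : ℝ := |x.2 - x.1|

/-- Cost of deleting (or inserting) a branch: half its persistence. -/
noncomputable def delCost (x : Branch) : ℝ := pers x / 2

/-- Relabel cost between branches: max coordinatewise difference of the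
saddle and extremum values. -/
noncomputable def relCost (x y : Branch) : ℝ := max |x.1 - y.1| |x.2 - y.2|

/-- Cost of a matched pair, where `none` plays the role of the empty node. -/
noncomputable def pairCost : Option Branch × Option Branch → ℝ
  | (some x, some y) => relCost x y
  | (some x, none) => delCost x
  | (none, some y) => delCost y
  | (none, none) => 0

/-- `M` is a matching between the branch sets `A` and `B`: every element of
`A` and of `B` appears in exactly one pair of `M`, pairs only involve
elements of `A`, `B` or the empty node, and `(λ, λ) ∉ M`. -/
def IsMatching (A B : Finset Branch)
    (M : Finset (Option Branch × Option Branch)) : Prop :=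
  (∀ a ∈ A, ∃! p, p ∈ M ∧ p.1 = some a) ∧
  (∀ b ∈ B, ∃! p, p ∈ M ∧ p.2 = some b) ∧
  (∀ p ∈ M, (∀ a, p.1 = some a → a ∈ A) ∧ (∀ b, p.2 = some b → b ∈ B)) ∧
  ((none, none) ∉ M)

/-- The cost of a matching: the largest cost of all its pairs. -/
noncomputable def matchingCost (M : Finset (Option Branch × Option Branch)) : ℝ :=
  M.fold max 0 pairCost

/-- The merge tree matching distance on branch sets: minimum matching cost. -/
noncomputable def dM (A B : Finset Branch) : ℝ :=
  sInf {c : ℝ | ∃ M, IsMatching A B M ∧ c = matchingCost M}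

/-- Persistence simplification: remove every branch of persistence `< ε`. -/
noncomputable def simplify (ε : ℝ) (A : Finset Branch) : Finset Branch :=
  A.filter (fun x => ε ≤ pers x)

/-- A partial matching: every element of `A` and of `B` appears in at most
one pair of `M`. -/
def IsPartialMatching (A B : Finset Branch)
    (M : Finset (Option Branch × Option Branch)) : Prop :=
  (∀ a ∈ A, ∀ p ∈ M, ∀ q ∈ M, p.1 = some a → q.1 = some a → p = q) ∧
  (∀ b ∈ B, ∀ p ∈ M, ∀ q ∈ M, p.2 = some b → q.2 = some b → p = q) ∧
  (∀ p ∈ M, (∀ a, p.1 = some a → a ∈ A) ∧ (∀ b, p.2 = some b → b ∈ B)) ∧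
  ((none, none) ∉ M)

/-- The `n`-th smallest element of a multiset of reals (1-indexed). -/
noncomputable def nthSmallest (s : Multiset ℝ) (n : ℕ) : ℝ :=
  (s.sort (· ≤ ·)).getD (n - 1) 0

lemma nth_le_of_countP {s : Multiset ℝ} {n : ℕ} {c : ℝ} (hn : 1 ≤ n)
    (h : n ≤ s.countP (· ≤ c)) : nthSmallest s n ≤ c := by
  set l := s.sort (· ≤ ·) with hl
  have hs : List.Pairwise (· ≤ ·) l := Multiset.pairwise_sort s _
  have h : n ≤ l.countP (fun x => decide (x ≤ c)) := by
    calc (n:ℕ) ≤ Multiset.countP (fun x => x ≤ c) s := h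
      _ = Multiset.countP (fun x => x ≤ c) (↑l) := by rw [Multiset.sort_eq]
      _ = l.countP (fun x => decide (x ≤ c)) := rfl
  have hlen : n - 1 < l.length := by
    have := List.countP_le_length (l := l) (p := fun x => decide (x ≤ c))
    omega
  have hD : nthSmallest s n = l[n-1] := List.getD_eq_getElem l 0 hlen
  rw [hD]
  by_contra hlt
  push_neg at hlt
  have hsplit : l = l.take (n-1) ++ l.drop (n-1) := (List.take_append_drop _ l).symm
  have hdrop : l.drop (n-1) = l[n-1] :: l.drop n := by
    have h01 : n - 1 + 1 = n := by omega
    rw [List.drop_eq_getElem_cons hlen, h01]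
  have hpw : List.Pairwise (· ≤ ·) (l.drop (n-1)) := hs.drop
  rw [hdrop, List.pairwise_cons] at hpw
  have hzero : (l.drop n).countP (fun x => decide (x ≤ c)) = 0 := by
    rw [List.countP_eq_zero]
    intro x hx
    simpa using not_le.mpr (lt_of_lt_of_le hlt (hpw.1 x hx))
  have : l.countP (fun x => decide (x ≤ c)) ≤ n - 1 := by
    conv_lhs => rw [hsplit]
    rw [List.countP_append, hdrop, List.countP_cons, hzero]
    have h1 : (l.take (n-1)).countP (fun x => decide (x ≤ c)) ≤ n - 1 := by
      calc _ ≤ (l.take (n-1)).length := List.countP_le_length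
        _ ≤ n - 1 := by simp
    have h2 : (decide (l[n-1] ≤ c)) = false := by simp [not_le.mpr hlt]
    rw [h2]
    simpa using h1
  omega

/-- **Validity of the size-difference heuristic.** If a partial matching `M'`
between BDTs `bf` and `bg` leaves sets `U ⊆ bf` and `V ⊆ bg` of unmatched
nodes with `n = |U| - |V| > 0`, then every full matching `M` extending `M'`
deletes at least `n` nodes of `U`, and its cost is at least the `n`-th
smallest half-persistence (deletion cost) among the nodes of `U`. -/
theorem sizeDifference_heuristic (bf bg : Finset Branch)
    (M' : Finset (Option Branch × Option Branch))
    (hM' : IsPartialMatching bf bg M')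
    (U V : Finset Branch)
    (hU : U = bf.filter (fun a => ∀ p ∈ M', p.1 ≠ some a))
    (hV : V = bg.filter (fun b => ∀ p ∈ M', p.2 ≠ some b))
    (n : ℕ) (hn : n = U.card - V.card) (hpos : V.card < U.card)
    (M : Finset (Option Branch × Option Branch))
    (hM : IsMatching bf bg M) (hext : M' ⊆ M) :
    n ≤ (U.filter (fun u => (some u, (none : Option Branch)) ∈ M)).card ∧
      nthSmallest (U.val.map delCost) n ≤ matchingCost M := by
  classical
  obtain ⟨hMa, hMb, hMmem, hMnn⟩ := hM
  set c := matchingCost M with hc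
  set D := U.filter (fun u => (some u, (none : Option Branch)) ∈ M) with hD
  set W := U.filter (fun u => ¬ ((some u, (none : Option Branch)) ∈ M)) with hW
  have hDW : D.card + W.card = U.card :=
    Finset.card_filter_add_card_filter_not _
  have key : ∀ u : Branch, u ∈ W → ∃ b, b ∈ V ∧ (some u, some b) ∈ M := by
    intro u hu
    obtain ⟨huU, hunot⟩ := Finset.mem_filter.mp hu
    have huU' := huU
    rw [hU, Finset.mem_filter] at huU'
    obtain ⟨hubf, hufree⟩ := huU'
    obtain ⟨p, ⟨hpM, hp1⟩, -⟩ := hMa u hubf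
    obtain ⟨p1, p2⟩ := p
    simp only at hp1
    subst hp1
    match hp2 : p2 with
    | none => exact absurd (hp2 ▸ hpM) hunot
    | some b =>
      subst hp2
      refine ⟨b, ?_, hpM⟩
      have hbbg : b ∈ bg := (hMmem _ hpM).2 b rfl
      rw [hV, Finset.mem_filter]
      refine ⟨hbbg, fun q hq hq2 => ?_⟩
      have hqM : q ∈ M := hext hq
      obtain ⟨r, hr, hruniq⟩ := hMb b hbbg
      have h1 : q = r := hruniq q ⟨hqM, hq2⟩
      have h2 : (some u, some b) = r := hruniq _ ⟨hpM, rfl⟩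
      exact hufree q hq (by rw [h1, ← h2])
  choose! f hfV hfM using key
  have hWV : W.card ≤ V.card := by
    apply Finset.card_le_card_of_injOn f (fun u hu => hfV u hu)
    intro u1 h1 u2 h2 hf
    have hbg1 : f u1 ∈ bg := by
      have := hfV u1 h1
      rw [hV, Finset.mem_filter] at this
      exact this.1
    obtain ⟨r, hr, hruniq⟩ := hMb (f u1) hbg1
    have e1 : (some u1, some (f u1)) = r := hruniq _ ⟨hfM u1 h1, rfl⟩
    have e2 : (some u2, some (f u2)) = r := hruniq _ ⟨hfM u2 h2, by rw [hf]⟩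
    have e3 := e1.trans e2.symm
    exact Option.some_injective _ (congrArg Prod.fst e3)
  have hcard : n ≤ D.card := by omega
  refine ⟨hcard, ?_⟩
  have hdel : ∀ u ∈ D, delCost u ≤ c := by
    intro u hu
    have hmem : (some u, (none : Option Branch)) ∈ M := (Finset.mem_filter.mp hu).2
    exact (Finset.le_fold_max (delCost u)).2 (Or.inr ⟨_, hmem, le_of_eq rfl⟩)
  have hsub : D.val.map delCost ≤ U.val.map delCost :=
    Multiset.map_le_map (Finset.val_le_iff.mpr (Finset.filter_subset _ _))
  have hall : (D.val.map delCost).countP (· ≤ c) = (D.val.map delCost).card := by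
    rw [Multiset.countP_eq_card]
    intro x hx
    obtain ⟨u, hu, rfl⟩ := Multiset.mem_map.mp hx
    exact hdel u hu
  have hcount : n ≤ (U.val.map delCost).countP (· ≤ c) := by
    calc n ≤ D.card := hcard
      _ = (D.val.map delCost).card := by simp
      _ = (D.val.map delCost).countP (· ≤ c) := hall.symm
      _ ≤ _ := Multiset.countP_le_of_le _ hsub
  exact nth_le_of_countP (by omega) hcount
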